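/- Let V be an irreducible (simple) module of the Virasoro algebra on which C acts as a scalar c, such that V is the direct sum of the generalized eigenspaces of L_0, and such that there exists an eigenvalue h₀ with nonzero generalized eigenspace whose real part is minimal among the eigenvalues with nonzero generalized eigenspace. Then V is a lowest weight module: V = U(𝔏)·v for some singular vector v ∈ V. -/
import Mathlib


/-- A representation of the Virasoro algebra on a complex vector space `V`:
a family of operators `L n` (`n : ℤ`) and an operator `C` satisfying the Virasoro
commutation relations
`[L m, L n] = (n - m) L (m+n) + (C/12)(n³ - n) δ_{m+n,0}` and `[C, L n] = 0`. -/
structure VirasoroRep (V : Type) [AddCommGroup V] [Module ℂ V] where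
  L : ℤ → Module.End ℂ V
  C : Module.End ℂ V
  comm_LL : ∀ m n : ℤ, L m * L n - L n * L m =
      ((n : ℂ) - (m : ℂ)) • L (m + n) +
        (if m + n = 0 then (((n : ℂ) ^ 3 - (n : ℂ)) / 12) else 0) • C
  comm_CL : ∀ n : ℤ, C * L n - L n * C = 0

namespace VirasoroRep

variable {V W : Type} [AddCommGroup V] [Module ℂ V] [AddCommGroup W] [Module ℂ W]

/-- `v` is a singular vector of weight `(h, c)`: it is annihilated by all `L (-n)`, `n ≥ 1`,
and is an eigenvector of `L 0` and `C` with eigenvalues `h` resp. `c`. -/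
def IsSingular (ρ : VirasoroRep V) (h c : ℂ) (v : V) : Prop :=
  (∀ n : ℤ, 1 ≤ n → ρ.L (-n) v = 0) ∧ ρ.L 0 v = h • v ∧ ρ.C v = c • v

/-- A linear subspace invariant under the Virasoro action, i.e. an `𝔏`-submodule. -/
def Invariant (ρ : VirasoroRep V) (p : Submodule ℂ V) : Prop :=
  (∀ n : ℤ, ∀ x ∈ p, ρ.L n x ∈ p) ∧ ∀ x ∈ p, ρ.C x ∈ p

/-- The `𝔏`-submodule `U(𝔏)·v` generated by a vector `v`: the smallest invariant subspace
containing `v`. -/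
def gen (ρ : VirasoroRep V) (v : V) : Submodule ℂ V :=
  sInf {p : Submodule ℂ V | ρ.Invariant p ∧ v ∈ p}

/-- The vector `v` generates the module: `U(𝔏)·v` is everything. -/
def Generates (ρ : VirasoroRep V) (v : V) : Prop :=
  ∀ p : Submodule ℂ V, ρ.Invariant p → v ∈ p → p = ⊤

/-- A homomorphism of Virasoro modules: a linear map intertwining the actions. -/
def IsHom (ρ : VirasoroRep V) (σ : VirasoroRep W) (f : V →ₗ[ℂ] W) : Prop :=
  (∀ (n : ℤ) (x : V), f (ρ.L n x) = σ.L n (f x)) ∧ ∀ x : V, f (ρ.C x) = σ.C (f x)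

end VirasoroRep

section aux

variable {V : Type} [AddCommGroup V] [Module ℂ V]

lemma step_rel (f g : Module.End ℂ V) (μ n : ℂ) (h : f * g - g * f = n • g) :
    (f - (μ + n) • 1) * g = g * (f - μ • 1) := by
  have h' : f * g = g * f + n • g := by rw [← h]; abel
  rw [sub_mul, mul_sub, h', smul_mul_assoc, mul_smul_comm, one_mul, mul_one, add_smul]
  module

lemma pow_rel (f g : Module.End ℂ V) (μ n : ℂ) (h : f * g - g * f = n • g) (k : ℕ) :
    (f - (μ + n) • 1) ^ k * g = g * (f - μ • 1) ^ k := by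
  induction k with
  | zero => simp
  | succ k ih =>
    rw [pow_succ, pow_succ, mul_assoc, step_rel f g μ n h, ← mul_assoc, ih, mul_assoc]

end aux

/-- An irreducible Virasoro module on which `C` acts as the scalar `c`, which is the direct
sum of the generalized eigenspaces of `L 0` and has an eigenvalue of minimal real part
(among those with nonzero generalized eigenspace), is a lowest weight module: it is generated
by a singular vector. -/
theorem irreducible_virasoro_module_is_lowest_weight
    (V : Type) [AddCommGroup V] [Module ℂ V] (ρ : VirasoroRep V) (c : ℂ)
    (hC : ∀ x : V, ρ.C x = c • x)
    (hirr : ∀ p : Submodule ℂ V, ρ.Invariant p → p = ⊥ ∨ p = ⊤)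
    (hnontriv : (⊥ : Submodule ℂ V) ≠ ⊤)
    (hsum : ⨆ μ : ℂ, Module.End.maxGenEigenspace (ρ.L 0) μ = ⊤)
    (h₀ : ℂ) (h₀ne : Module.End.maxGenEigenspace (ρ.L 0) h₀ ≠ ⊥)
    (h₀min : ∀ μ : ℂ, Module.End.maxGenEigenspace (ρ.L 0) μ ≠ ⊥ → h₀.re ≤ μ.re) :
    ∃ v : V, v ≠ 0 ∧ (∃ h' : ℂ, ρ.IsSingular h' c v) ∧ ρ.Generates v := by
  -- commutation [L0, Ln] = n • Ln
  have hcomm : ∀ n : ℤ, ρ.L 0 * ρ.L n - ρ.L n * ρ.L 0 = (n : ℂ) • ρ.L n := by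
    intro n
    have h := ρ.comm_LL 0 n
    simp only [zero_add] at h
    rcases eq_or_ne n 0 with rfl | hn
    · simpa using h
    · rw [h, if_neg hn]; simp
  -- L n maps maxGen μ to maxGen (μ + n)
  have hmap : ∀ (n : ℤ) (μ : ℂ) (x : V), x ∈ Module.End.maxGenEigenspace (ρ.L 0) μ →
      ρ.L n x ∈ Module.End.maxGenEigenspace (ρ.L 0) (μ + n) := by
    intro n μ x hx
    rw [Module.End.mem_maxGenEigenspace] at hx ⊢
    obtain ⟨k, hk⟩ := hx
    refine ⟨k, ?_⟩
    have := pow_rel (ρ.L 0) (ρ.L n) μ (n : ℂ) (hcomm n) k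
    have := congrArg (fun T : Module.End ℂ V => T x) this
    simp only [Module.End.mul_apply] at this
    rw [this, hk, map_zero]
  -- maxGen (h₀ - n) = ⊥ for n ≥ 1
  have hbot : ∀ n : ℤ, 1 ≤ n → Module.End.maxGenEigenspace (ρ.L 0) (h₀ + (-n : ℤ)) = ⊥ := by
    intro n hn
    by_contra hne
    have := h₀min _ hne
    have : (h₀ : ℂ).re ≤ h₀.re - (n : ℝ) := by
      simpa [Complex.add_re, Complex.intCast_re, sub_eq_add_neg] using this
    have : (n : ℝ) ≤ 0 := by linarith
    have : (1 : ℝ) ≤ (n : ℝ) := by exact_mod_cast hn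
    linarith
  -- pick eigenvector
  obtain ⟨w, hw, hw0⟩ := (Submodule.ne_bot_iff _).mp h₀ne
  rw [Module.End.mem_maxGenEigenspace] at hw
  have hex : ∃ k : ℕ, ((ρ.L 0 - h₀ • 1) ^ k) w = 0 := hw
  classical
  let k := Nat.find hex
  have hk : ((ρ.L 0 - h₀ • 1) ^ k) w = 0 := Nat.find_spec hex
  have hkpos : k ≠ 0 := by
    intro h0
    apply hw0
    simpa [h0] using hk
  set v : V := ((ρ.L 0 - h₀ • 1) ^ (k - 1)) w with hv
  have hvne : v ≠ 0 := Nat.find_min hex (Nat.sub_lt (Nat.pos_of_ne_zero hkpos) one_pos)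
  have h2 : (ρ.L 0 - h₀ • 1) v = 0 := by
    rw [hv, ← Module.End.mul_apply, ← pow_succ']
    have hke : k - 1 + 1 = k := by omega
    rw [hke, hk]
  have hL0v : ρ.L 0 v = h₀ • v := by
    have := h2
    rw [LinearMap.sub_apply, LinearMap.smul_apply, Module.End.one_apply, sub_eq_zero] at this
    exact this
  have hvmem : v ∈ Module.End.maxGenEigenspace (ρ.L 0) h₀ := by
    rw [Module.End.mem_maxGenEigenspace]
    exact ⟨1, by rw [pow_one]; exact h2⟩
  refine ⟨v, hvne, ⟨h₀, ?_, hL0v, hC v⟩, ?_⟩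
  · intro n hn
    have := hmap (-n) h₀ v hvmem
    rw [hbot n hn] at this
    simpa using this
  · intro p hp hvp
    rcases hirr p hp with h | h
    · exfalso; exact hvne (by simpa [h] using hvp)
    · exact h
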